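/- arXiv:1012.1231 — 7 statements merged into one kernel-verified Lean document; each statement's English description precedes it below -/
import Mathlib

section
/- A cubic graph G is 3-edge-colorable if and only if the directed graph D obtained from G by replacing each edge {u,v} with the two oppositely directed arcs (u,v) and (v,u) contains an anti-directed 2-factor. -/
/-- Out-degree of `v` in the digraph given by arc relation `A`. -/
noncomputable def outDeg {V : Type*} (A : V → V → Prop) (v : V) : ℕ := {u | A v u}.ncard

/-- In-degree of `v` in the digraph given by arc relation `A`. -/
noncomputable def inDeg {V : Type*} (A : V → V → Prop) (v : V) : ℕ := {u | A u v}.ncard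

/-- `H` is the underlying graph of a spanning collection of vertex-disjoint anti-directed
cycles of the digraph `A`, with `S` the set of "source" vertices.  Since arc directions
alternate along an anti-directed cycle, its vertices split into sources (both incident
arcs point out) and sinks (both incident arcs point in); thus an anti-directed 2-factor
is the same as a 2-regular spanning simple graph each of whose edges joins a source to a
sink along an arc of `A`. -/
def AntiDirected2Factor {V : Type*} (A : V → V → Prop) (S : Set V) (H : SimpleGraph V) :
    Prop :=
  (∀ v, (H.neighborSet v).ncard = 2) ∧
    ∀ u v, H.Adj u v → (u ∈ S ∧ v ∉ S ∧ A u v) ∨ (v ∈ S ∧ u ∉ S ∧ A v u)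

/-- The digraph with arc relation `A` has an anti-directed 2-factor. -/
def HasAntiDirected2Factor {V : Type*} (A : V → V → Prop) : Prop :=
  ∃ (S : Set V) (H : SimpleGraph V), AntiDirected2Factor A S H


-- key permutation lemma: if f,g are fixed-point-free involutions, then f v is not
-- in the ⟨f*g⟩-orbit of v.
lemma aux_not_sameCycle {V : Type*} (f g : Equiv.Perm V)
    (hf2 : f * f = 1) (hg2 : g * g = 1)
    (hf : ∀ x, f x ≠ x) (hg : ∀ x, g x ≠ x) (v : V) :
    ¬ (f * g).SameCycle v (f v) := by
  set π := f * g with hπ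
  have hfinv : f⁻¹ = f := by
    rw [inv_eq_iff_mul_eq_one]; exact hf2
  have hginv : g⁻¹ = g := by
    rw [inv_eq_iff_mul_eq_one]; exact hg2
  have h1 : f * π * f⁻¹ = π⁻¹ := by
    rw [hπ, hfinv, mul_inv_rev, hfinv, hginv, ← mul_assoc, hf2, one_mul]
  have hconj : ∀ n : ℤ, f * π ^ n * f = π ^ (-n) := by
    intro n
    have h2 : (MulAut.conj f) (π ^ n) = ((MulAut.conj f) π) ^ n := map_zpow _ _ _
    have h3 : (MulAut.conj f) π = π⁻¹ := by simpa [MulAut.conj_apply] using h1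
    rw [h3] at h2
    have : f * π ^ n * f⁻¹ = π⁻¹ ^ n := h2
    rw [hfinv] at this
    rw [this, inv_zpow, zpow_neg]
  have hffx : ∀ x, f (f x) = x := fun x => by
    have := congrArg (fun σ : Equiv.Perm V => σ x) hf2
    simpa using this
  rintro ⟨n, hn⟩
  rcases Int.even_or_odd n with ⟨t, ht⟩ | ⟨t, ht⟩
  · -- n = t + t : f (π^t v) = π^t v
    apply hf ((π ^ t) v)
    have := congrArg (fun σ : Equiv.Perm V => σ (f v)) (hconj t)
    simp only [Equiv.Perm.mul_apply] at this
    rw [hffx] at this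
    -- this : f ((π^t) v) = (π ^ (-t)) (f v)
    rw [this, ← hn, ← Equiv.Perm.mul_apply, ← zpow_add]
    congr 2
    omega
  · -- n = 2t+1 : g (π^t v) = π^t v
    apply hg ((π ^ t) v)
    have hgfπ : ∀ x, g x = f (π x) := by
      intro x
      have : f * π = g := by rw [hπ, ← mul_assoc, hf2, one_mul]
      have := congrArg (fun σ : Equiv.Perm V => σ x) this
      simpa [Equiv.Perm.mul_apply] using this.symm
    rw [hgfπ]
    have : π ((π ^ t) v) = (π ^ (t + 1)) v := by
      rw [← Equiv.Perm.mul_apply, ← zpow_one_add, add_comm]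
    rw [this]
    have h4 := congrArg (fun σ : Equiv.Perm V => σ (f v)) (hconj (t + 1))
    simp only [Equiv.Perm.mul_apply] at h4
    rw [hffx] at h4
    rw [h4, ← hn, ← Equiv.Perm.mul_apply, ← zpow_add]
    congr 2
    omega

lemma aux_forward {V : Type*} (G : SimpleGraph V) (f g : V → V)
    (hfadj : ∀ v, G.Adj v (f v)) (hgadj : ∀ v, G.Adj v (g v))
    (hf2 : Function.Involutive f) (hg2 : Function.Involutive g)
    (hfg : ∀ v, f v ≠ g v) :
    HasAntiDirected2Factor (fun u v => G.Adj u v) := by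
  classical
  have hfne : ∀ v, f v ≠ v := fun v => (hfadj v).ne'
  have hgne : ∀ v, g v ≠ v := fun v => (hgadj v).ne'
  set fP : Equiv.Perm V := hf2.toPerm f with hfP
  set gP : Equiv.Perm V := hg2.toPerm g with hgP
  have hfPa : ∀ x, fP x = f x := fun _ => rfl
  have hgPa : ∀ x, gP x = g x := fun _ => rfl
  have hfP2 : fP * fP = 1 := by
    ext x; simp [Equiv.Perm.mul_apply, hfPa, hf2 x]
  have hgP2 : gP * gP = 1 := by
    ext x; simp [Equiv.Perm.mul_apply, hgPa, hg2 x]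
  set π : Equiv.Perm V := fP * gP with hπ
  have hπa : ∀ x, π x = f (g x) := fun x => rfl
  have hNSC : ∀ v, ¬ π.SameCycle v (f v) := fun v =>
    aux_not_sameCycle fP gP hfP2 hgP2 (fun x => hfne x) (fun x => hgne x) v
  -- conjugation
  have hfinv : fP⁻¹ = fP := by rw [inv_eq_iff_mul_eq_one]; exact hfP2
  have hconj : ∀ n : ℤ, fP * π ^ n * fP = π ^ (-n) := by
    intro n
    have h1 : fP * π * fP⁻¹ = π⁻¹ := by
      rw [hπ, hfinv, mul_inv_rev, hfinv]
      rw [show gP⁻¹ = gP by rw [inv_eq_iff_mul_eq_one]; exact hgP2]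
      rw [← mul_assoc, hfP2, one_mul]
    have h2 : (MulAut.conj fP) (π ^ n) = ((MulAut.conj fP) π) ^ n := map_zpow _ _ _
    have h3 : (MulAut.conj fP) π = π⁻¹ := by simpa [MulAut.conj_apply] using h1
    rw [h3] at h2
    have h4 : fP * π ^ n * fP⁻¹ = π⁻¹ ^ n := h2
    rw [hfinv] at h4
    rw [h4, inv_zpow, zpow_neg]
  have hLf : ∀ a b, π.SameCycle a b → π.SameCycle (f a) (f b) := by
    rintro a b ⟨n, hn⟩
    refine ⟨-n, ?_⟩
    have := congrArg (fun σ : Equiv.Perm V => σ (f a)) (hconj n)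
    simp only [Equiv.Perm.mul_apply] at this
    rw [hfPa, hfPa, hf2 a] at this
    -- this : f ((π ^ n) a) = (π ^ (-n)) (f a)
    rw [← this, hn]
  -- the setoid
  have requiv : Equivalence (fun u v => π.SameCycle u v ∨ π.SameCycle u (f v)) := by
    constructor
    · intro x; exact Or.inl (Equiv.Perm.SameCycle.refl _ _)
    · rintro x y (h | h)
      · exact Or.inl h.symm
      · refine Or.inr ?_
        have := hLf _ _ h
        rw [hf2 y] at this
        exact this.symm
    · rintro x y z (h1 | h1) (h2 | h2)
      · exact Or.inl (h1.trans h2)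
      · exact Or.inr (h1.trans h2)
      · exact Or.inr (h1.trans (hLf _ _ h2))
      · have := hLf _ _ h2
        rw [hf2 z] at this
        exact Or.inl (h1.trans this)
  set sd : Setoid V := ⟨fun u v => π.SameCycle u v ∨ π.SameCycle u (f v), requiv⟩ with hsd
  set S : Set V := {v | π.SameCycle (Quotient.mk sd v).out v} with hS
  have hrel : ∀ v, π.SameCycle (Quotient.mk sd v).out v ∨
      π.SameCycle (Quotient.mk sd v).out (f v) := fun v =>
    Quotient.exact (Quotient.out_eq (Quotient.mk sd v))
  have hout_f : ∀ v, (Quotient.mk sd (f v)).out = (Quotient.mk sd v).out := by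
    intro v
    have : Quotient.mk sd (f v) = Quotient.mk sd v := by
      apply Quotient.sound
      show π.SameCycle (f v) v ∨ π.SameCycle (f v) (f v)
      exact Or.inr (Equiv.Perm.SameCycle.refl _ _)
    rw [this]
  have hout_g : ∀ v, (Quotient.mk sd (g v)).out = (Quotient.mk sd v).out := by
    intro v
    have : Quotient.mk sd (g v) = Quotient.mk sd v := by
      apply Quotient.sound
      show π.SameCycle (g v) v ∨ π.SameCycle (g v) (f v)
      exact Or.inr ⟨1, by simp [hπa, hg2 v]⟩
    rw [this]
  have hxor : ∀ v, v ∈ S ↔ f v ∉ S := by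
    intro v
    have hmemf : f v ∈ S ↔ π.SameCycle (Quotient.mk sd v).out (f v) := by
      rw [hS]; simp only [Set.mem_setOf_eq, hout_f]
    have hnotboth : ¬ (π.SameCycle (Quotient.mk sd v).out v ∧
        π.SameCycle (Quotient.mk sd v).out (f v)) := by
      rintro ⟨h1, h2⟩
      exact hNSC v (h1.symm.trans h2)
    constructor
    · intro hv hfv
      exact hnotboth ⟨hv, hmemf.mp hfv⟩
    · intro hfv
      rcases hrel v with h | h
      · exact h
      · exact absurd (hmemf.mpr h) hfv
  have hgS : ∀ v, g v ∈ S ↔ f v ∈ S := by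
    intro v
    have hscfg : π.SameCycle (g v) (f v) := ⟨1, by simp [hπa, hg2 v]⟩
    rw [hS]
    simp only [Set.mem_setOf_eq, hout_f, hout_g]
    exact ⟨fun h => h.trans hscfg, fun h => h.trans hscfg.symm⟩
  -- the graph H
  refine ⟨S, SimpleGraph.mk (fun u v => f u = v ∨ g u = v) ?_ ?_, ?_, ?_⟩
  · constructor; rintro u v (h | h)
    · left; rw [← h, hf2 u]
    · right; rw [← h, hg2 u]
  · constructor; rintro v (h | h)
    · exact hfne v h
    · exact hgne v h
  · intro v
    have : {u | f v = u ∨ g v = u} = {f v, g v} := by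
      ext u; simp [eq_comm, Set.mem_insert_iff]
    show ({u | f v = u ∨ g v = u} : Set V).ncard = 2
    rw [this]
    exact Set.ncard_pair (hfg v)
  · rintro u v (h | h)
    · -- f u = v
      subst h
      by_cases hu : u ∈ S
      · exact Or.inl ⟨hu, (hxor u).mp hu, hfadj u⟩
      · refine Or.inr ⟨?_, hu, G.adj_symm (hfadj u)⟩
        by_contra hfu
        exact hu ((hxor u).mpr hfu)
      -- done
    · subst h
      have hgu : g u ∈ S ↔ u ∉ S := by
        rw [hgS u]
        constructor
        · intro h hu; exact (hxor u).mp hu h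
        · intro hu
          by_contra hfu
          exact hu ((hxor u).mpr hfu)
      by_cases hu : u ∈ S
      · exact Or.inl ⟨hu, fun h => (hgu.mp h) hu, hgadj u⟩
      · exact Or.inr ⟨hgu.mpr hu, hu, G.adj_symm (hgadj u)⟩

lemma aux_backward {V : Type*} [Fintype V] (G : SimpleGraph V)
    (hcubic : ∀ v : V, (G.neighborSet v).ncard = 3)
    (S : Set V) (H : SimpleGraph V)
    (h : AntiDirected2Factor (fun u v => G.Adj u v) S H) :
    ∃ c : Sym2 V → Fin 3, ∀ u v w : V, G.Adj u v → G.Adj u w → v ≠ w →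
        c s(u, v) ≠ c s(u, w) := by
  classical
  obtain ⟨hdeg, hcross⟩ := h
  have hHG : ∀ {u v}, H.Adj u v → G.Adj u v := by
    intro u v huv
    rcases hcross u v huv with ⟨_, _, ha⟩ | ⟨_, _, ha⟩
    · exact ha
    · exact G.adj_symm ha
  have hSout : ∀ {u v}, H.Adj u v → u ∈ S → v ∉ S := by
    intro u v huv hu
    rcases hcross u v huv with ⟨_, hv, _⟩ | ⟨_, hu', _⟩
    · exact hv
    · exact absurd hu hu'
  have hSin : ∀ {u v}, H.Adj u v → u ∉ S → v ∈ S := by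
    intro u v huv hu
    rcases hcross u v huv with ⟨hu', _, _⟩ | ⟨hv, _, _⟩
    · exact absurd hu' hu
    · exact hv
  have hdegF : ∀ v, (H.neighborFinset v).card = 2 := by
    intro v
    rw [SimpleGraph.neighborFinset_def, ← Set.ncard_eq_toFinset_card']
    exact hdeg v
  have hdegG : ∀ v, (G.neighborFinset v).card = 3 := by
    intro v
    rw [SimpleGraph.neighborFinset_def, ← Set.ncard_eq_toFinset_card']
    exact hcubic v
  -- |S| = |Sᶜ|
  have hcards : S.toFinset.card = Sᶜ.toFinset.card := by
    have := Finset.card_mul_eq_card_mul (fun a b => H.Adj a b)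
      (s := S.toFinset) (t := Sᶜ.toFinset) (m := 2) (n := 2)
      (fun a ha => by
        rw [Set.mem_toFinset] at ha
        have : Sᶜ.toFinset.bipartiteAbove (fun a b => H.Adj a b) a
            = H.neighborFinset a := by
          ext b
          simp only [Finset.mem_bipartiteAbove, Set.mem_toFinset, Set.mem_compl_iff,
            SimpleGraph.mem_neighborFinset]
          exact ⟨fun h => h.2, fun h => ⟨hSout h ha, h⟩⟩
        rw [this, hdegF])
      (fun b hb => by
        rw [Set.mem_toFinset, Set.mem_compl_iff] at hb
        have : S.toFinset.bipartiteBelow (fun a b => H.Adj a b) b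
            = H.neighborFinset b := by
          ext a
          simp only [Finset.mem_bipartiteBelow, Set.mem_toFinset,
            SimpleGraph.mem_neighborFinset]
          exact ⟨fun h => H.adj_symm h.2, fun h => ⟨hSin h hb, H.adj_symm h⟩⟩
        rw [this, hdegF])
    omega
  -- Hall's condition
  have hall : ∀ s : Finset ↥S, s.card ≤ (s.biUnion (fun x => H.neighborFinset ↑x)).card := by
    intro s
    have := Finset.card_mul_le_card_mul (fun (x : ↥S) (y : V) => H.Adj ↑x y)
      (s := s) (t := s.biUnion (fun x => H.neighborFinset ↑x)) (m := 2) (n := 2)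
      (fun a ha => by
        have hsub : H.neighborFinset ↑a ⊆
            (s.biUnion (fun x => H.neighborFinset ↑x)).bipartiteAbove
              (fun (x : ↥S) (y : V) => H.Adj ↑x y) a := by
          intro y hy
          rw [Finset.mem_bipartiteAbove]
          exact ⟨Finset.mem_biUnion.mpr ⟨a, ha, hy⟩, (SimpleGraph.mem_neighborFinset _ _ _).mp hy⟩
        calc 2 = (H.neighborFinset ↑a).card := (hdegF _).symm
        _ ≤ _ := Finset.card_le_card hsub)
      (fun b _ => by
        have : (s.bipartiteBelow (fun (x : ↥S) (y : V) => H.Adj ↑x y) b).card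
            ≤ (H.neighborFinset b).card := by
          refine Finset.card_le_card_of_injOn (fun x => (x : V)) ?_ ?_
          · intro x hx
            rw [Finset.mem_coe, Finset.mem_bipartiteBelow] at hx
            exact (SimpleGraph.mem_neighborFinset _ _ _).mpr (H.adj_symm hx.2)
          · exact fun x _ y _ hxy => Subtype.ext hxy
        rw [hdegF] at this
        exact this)
    omega
  obtain ⟨fm, hfm_inj, hfm_mem⟩ :=
    (Finset.all_card_le_biUnion_card_iff_exists_injective
      (fun (x : ↥S) => H.neighborFinset ↑x)).mp hall
  have hfm_adj : ∀ x : ↥S, H.Adj ↑x (fm x) :=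
    fun x => (SimpleGraph.mem_neighborFinset _ _ _).mp (hfm_mem x)
  have hfm_nS : ∀ x : ↥S, fm x ∉ S := fun x => hSout (hfm_adj x) x.2
  -- surjectivity onto Sᶜ
  have hsurj : ∀ y : V, y ∉ S → ∃ x : ↥S, fm x = y := by
    intro y hy
    have hcard : Fintype.card ↥S = Fintype.card ↥(Sᶜ) := by
      rw [← Set.toFinset_card, ← Set.toFinset_card]
      exact hcards
    set F : ↥S → ↥(Sᶜ) := fun x => ⟨fm x, hfm_nS x⟩ with hF
    have hFinj : Function.Injective F := by
      intro a b hab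
      apply hfm_inj
      exact congrArg Subtype.val hab
    have hFbij : Function.Bijective F :=
      (Fintype.bijective_iff_injective_and_card F).mpr ⟨hFinj, hcard⟩
    obtain ⟨x, hx⟩ := hFbij.2 ⟨y, hy⟩
    exact ⟨x, congrArg Subtype.val hx⟩
  -- matched edges
  set M : Sym2 V → Prop := fun e => ∃ x : ↥S, e = s((x : V), fm x) with hM
  have hMuniq : ∀ u v w : V, M s(u, v) → M s(u, w) → v = w := by
    rintro u v w ⟨x, hx⟩ ⟨y, hy⟩
    rw [Sym2.eq_iff] at hx hy
    rcases hx with ⟨hx1, hx2⟩ | ⟨hx1, hx2⟩ <;> rcases hy with ⟨hy1, hy2⟩ | ⟨hy1, hy2⟩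
    · have : x = y := Subtype.ext (hx1.symm.trans hy1)
      rw [hx2, hy2, this]
    · exfalso; apply hfm_nS y; rw [← hy1, hx1]; exact x.2
    · exfalso; apply hfm_nS x; rw [← hx1, hy1]; exact y.2
    · have : x = y := hfm_inj (hx1.symm.trans hy1)
      rw [hx2, hy2, this]
  have hMH : ∀ u v : V, M s(u, v) → H.Adj u v := by
    rintro u v ⟨x, hx⟩
    rw [Sym2.eq_iff] at hx
    rcases hx with ⟨h1, h2⟩ | ⟨h1, h2⟩
    · rw [h1, h2]; exact hfm_adj x
    · rw [h1, h2]; exact H.adj_symm (hfm_adj x)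
  have hMex : ∀ u : V, ∃ v, H.Adj u v ∧ M s(u, v) := by
    intro u
    by_cases hu : u ∈ S
    · exact ⟨fm ⟨u, hu⟩, hfm_adj ⟨u, hu⟩, ⟨⟨u, hu⟩, rfl⟩⟩
    · obtain ⟨x, hx⟩ := hsurj u hu
      refine ⟨(x : V), ?_, ⟨x, ?_⟩⟩
      · rw [← hx]; exact H.adj_symm (hfm_adj x)
      · rw [← hx, Sym2.eq_swap]
  -- the coloring
  refine ⟨fun e => if M e then 0 else if e ∈ H.edgeSet then 1 else 2, ?_⟩
  intro u v w huv huw hvw heq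
  dsimp only at heq
  by_cases h1 : M s(u, v) <;> by_cases h2 : M s(u, w)
  · exact hvw (hMuniq u v w h1 h2)
  · -- colors 0 vs (1 or 2)
    rw [if_pos h1, if_neg h2] at heq
    by_cases h3 : s(u, w) ∈ H.edgeSet
    · rw [if_pos h3] at heq; exact absurd heq (by decide)
    · rw [if_neg h3] at heq; exact absurd heq (by decide)
  · rw [if_neg h1, if_pos h2] at heq
    by_cases h3 : s(u, v) ∈ H.edgeSet
    · rw [if_pos h3] at heq; exact absurd heq (by decide)
    · rw [if_neg h3] at heq; exact absurd heq (by decide)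
  · rw [if_neg h1, if_neg h2] at heq
    by_cases h3 : s(u, v) ∈ H.edgeSet <;> by_cases h4 : s(u, w) ∈ H.edgeSet
    · -- both H edges, neither matched
      obtain ⟨z, hz_adj, hz_M⟩ := hMex u
      have hv_nb : v ∈ H.neighborFinset u :=
        (SimpleGraph.mem_neighborFinset _ _ _).mpr ((SimpleGraph.mem_edgeSet H).mp h3)
      have hw_nb : w ∈ H.neighborFinset u :=
        (SimpleGraph.mem_neighborFinset _ _ _).mpr ((SimpleGraph.mem_edgeSet H).mp h4)
      have hsub : ({v, w} : Finset V) ⊆ H.neighborFinset u := by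
        intro a ha
        rcases Finset.mem_insert.mp ha with rfl | ha
        · exact hv_nb
        · rw [Finset.mem_singleton] at ha; rw [ha]; exact hw_nb
      have hEq : H.neighborFinset u = ({v, w} : Finset V) := by
        symm
        apply Finset.eq_of_subset_of_card_le hsub
        rw [hdegF u, Finset.card_insert_of_notMem (by simpa using hvw),
          Finset.card_singleton]
      have hz_nb : z ∈ H.neighborFinset u :=
        (SimpleGraph.mem_neighborFinset _ _ _).mpr hz_adj
      rw [hEq] at hz_nb
      rcases Finset.mem_insert.mp hz_nb with rfl | hz
      · exact h1 hz_M
      · rw [Finset.mem_singleton] at hz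
        rw [hz] at hz_M
        exact h2 hz_M
    · rw [if_pos h3, if_neg h4] at heq; exact absurd heq (by decide)
    · rw [if_neg h3, if_pos h4] at heq; exact absurd heq (by decide)
    · -- both non H edges: contradiction with degrees
      have hv_nb : v ∉ H.neighborFinset u := by
        rw [SimpleGraph.mem_neighborFinset]
        exact fun h => h3 ((SimpleGraph.mem_edgeSet H).mpr h)
      have hw_nb : w ∉ H.neighborFinset u := by
        rw [SimpleGraph.mem_neighborFinset]
        exact fun h => h4 ((SimpleGraph.mem_edgeSet H).mpr h)
      have hsub : insert v (insert w (H.neighborFinset u)) ⊆ G.neighborFinset u := by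
        intro a ha
        rcases Finset.mem_insert.mp ha with rfl | ha
        · exact (SimpleGraph.mem_neighborFinset _ _ _).mpr huv
        · rcases Finset.mem_insert.mp ha with rfl | ha
          · exact (SimpleGraph.mem_neighborFinset _ _ _).mpr huw
          · exact (SimpleGraph.mem_neighborFinset _ _ _).mpr
              (hHG ((SimpleGraph.mem_neighborFinset _ _ _).mp ha))
      have hcard4 : (insert v (insert w (H.neighborFinset u))).card = 4 := by
        rw [Finset.card_insert_of_notMem, Finset.card_insert_of_notMem hw_nb, hdegF]
        rw [Finset.mem_insert]
        push_neg
        exact ⟨hvw, hv_nb⟩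
      have := Finset.card_le_card hsub
      rw [hcard4, hdegG] at this
      omega


/-- Existence and uniqueness of the neighbor of each color at each vertex. -/
lemma aux_exists_unique_color {V : Type*} [Fintype V] (G : SimpleGraph V)
    (hcubic : ∀ v : V, (G.neighborSet v).ncard = 3)
    (c : Sym2 V → Fin 3)
    (hc : ∀ u v w : V, G.Adj u v → G.Adj u w → v ≠ w → c s(u, v) ≠ c s(u, w))
    (i : Fin 3) (v : V) : ∃! u, G.Adj v u ∧ c s(v, u) = i := by
  classical
  have hcard : Fintype.card ↥(G.neighborFinset v) = 3 := by
    rw [Fintype.card_coe, SimpleGraph.neighborFinset_def, ← Set.ncard_eq_toFinset_card']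
    exact hcubic v
  set φ : ↥(G.neighborFinset v) → Fin 3 := fun u => c s(v, (u : V)) with hφ
  have hinj : Function.Injective φ := by
    intro a b hab
    by_contra hne
    exact hc v a b ((SimpleGraph.mem_neighborFinset _ _ _).mp a.2)
      ((SimpleGraph.mem_neighborFinset _ _ _).mp b.2)
      (fun h => hne (Subtype.ext h)) hab
  have hbij : Function.Bijective φ :=
    (Fintype.bijective_iff_injective_and_card φ).mpr ⟨hinj, by rw [hcard]; rfl⟩
  obtain ⟨u, hu⟩ := hbij.2 i
  refine ⟨(u : V), ⟨(SimpleGraph.mem_neighborFinset _ _ _).mp u.2, hu⟩, ?_⟩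
  rintro y ⟨hy1, hy2⟩
  have hymem : y ∈ G.neighborFinset v := (SimpleGraph.mem_neighborFinset _ _ _).mpr hy1
  have : φ ⟨y, hymem⟩ = φ u := by rw [hu]; exact hy2
  exact congrArg Subtype.val (hinj this)

/-- A cubic graph `G` is 3-edge-colorable iff the digraph obtained by replacing each
edge by two oppositely directed arcs has an anti-directed 2-factor. -/
theorem cubic_three_edge_colorable_iff_antiDirected2Factor {V : Type*} [Fintype V]
    (G : SimpleGraph V) (hcubic : ∀ v : V, (G.neighborSet v).ncard = 3) :
    (∃ c : Sym2 V → Fin 3, ∀ u v w : V, G.Adj u v → G.Adj u w → v ≠ w →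
        c s(u, v) ≠ c s(u, w)) ↔
      HasAntiDirected2Factor (fun u v => G.Adj u v) := by
  constructor
  · rintro ⟨c, hc⟩
    have key := aux_exists_unique_color G hcubic c hc
    set f : V → V := fun v => (key 0 v).choose with hf
    set g : V → V := fun v => (key 1 v).choose with hg
    have hfspec : ∀ v, G.Adj v (f v) ∧ c s(v, f v) = 0 := fun v => (key 0 v).choose_spec.1
    have hgspec : ∀ v, G.Adj v (g v) ∧ c s(v, g v) = 1 := fun v => (key 1 v).choose_spec.1
    have hfuniq : ∀ v u, G.Adj v u → c s(v, u) = 0 → u = f v :=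
      fun v u h1 h2 => (key 0 v).choose_spec.2 u ⟨h1, h2⟩
    have hguniq : ∀ v u, G.Adj v u → c s(v, u) = 1 → u = g v :=
      fun v u h1 h2 => (key 1 v).choose_spec.2 u ⟨h1, h2⟩
    have hf2 : Function.Involutive f := by
      intro v
      have h1 := (hfspec v).1
      have h2 := (hfspec v).2
      rw [Sym2.eq_swap] at h2
      exact (hfuniq (f v) v (G.adj_symm h1) h2).symm
    have hg2 : Function.Involutive g := by
      intro v
      have h1 := (hgspec v).1
      have h2 := (hgspec v).2
      rw [Sym2.eq_swap] at h2
      exact (hguniq (g v) v (G.adj_symm h1) h2).symm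
    have hfg : ∀ v, f v ≠ g v := by
      intro v h
      have h0 := (hfspec v).2
      have h1 := (hgspec v).2
      rw [h] at h0
      rw [h0] at h1
      exact absurd h1 (by decide)
    exact aux_forward G f g (fun v => (hfspec v).1) (fun v => (hgspec v).1) hf2 hg2 hfg
  · rintro ⟨S, H, hH⟩
    exact aux_backward G hcubic S H hH
end

section
/- Let G be a bipartite graph with equipartition V(G) = X ∪ Y. If U ⊆ X is a minimal deficient set of vertices (i.e., |N^(2)(U)| < 2|U| and no proper subset of U is deficient), then 2|U| − 2 ≤ |N^(2)(U)|. -/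
/-- Number of neighbours in `U` of the vertex `y`, for the bipartite graph with
parts `α`, `β` given by the relation `R`. -/
noncomputable def nbrIn {α β : Type*} (R : α → β → Prop) (U : Set α) (y : β) : ℕ :=
  {x | x ∈ U ∧ R x y}.ncard

/-- `|N^(2)(U)|`: each neighbour of `U` is counted with multiplicity
`min 2 (number of its neighbours in U)`. -/
noncomputable def N2 {α β : Type*} [Fintype β] (R : α → β → Prop) (U : Set α) : ℕ :=
  ∑ y : β, min 2 (nbrIn R U y)

/-- `U` is a deficient set: `|N^(2)(U)| < 2|U|`. -/
def Deficient {α β : Type*} [Fintype β] (R : α → β → Prop) (U : Set α) : Prop :=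
  N2 R U < 2 * U.ncard

/-- `U` is a minimal deficient set. -/
def MinimalDeficient {α β : Type*} [Fintype β] (R : α → β → Prop) (U : Set α) : Prop :=
  Deficient R U ∧ ∀ W ⊂ U, ¬ Deficient R W

/-- Degree of a vertex `x ∈ α` in the bipartite graph `R`. -/
noncomputable def degX {α β : Type*} (R : α → β → Prop) (x : α) : ℕ := {y | R x y}.ncard

/-- Degree of a vertex `y ∈ β` in the bipartite graph `R`. -/
noncomputable def degY {α β : Type*} (R : α → β → Prop) (y : β) : ℕ := {x | R x y}.ncard

/-- The bipartite graph `R` has a 2-factor: a spanning subgraph in which every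
vertex has degree exactly `2`. -/
def HasBipTwoFactor {α β : Type*} (R : α → β → Prop) : Prop :=
  ∃ H : α → β → Prop, (∀ x y, H x y → R x y) ∧
    (∀ x, {y | H x y}.ncard = 2) ∧ (∀ y, {x | H x y}.ncard = 2)

/-- If `U` is a minimal deficient set in a bipartite graph with equipartition, then
`2|U| - 2 ≤ |N^(2)(U)|`. -/
theorem minimalDeficient_lower_bound {α β : Type*} [Fintype α] [Fintype β]
    (R : α → β → Prop) (hcard : Fintype.card α = Fintype.card β)
    (U : Set α) (hU : MinimalDeficient R U) :
    2 * U.ncard ≤ N2 R U + 2 := by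
  rcases U.eq_empty_or_nonempty with h | ⟨u, hu⟩
  · simp [h]
  · have hW : U \ {u} ⊂ U := Set.sdiff_singleton_ssubset.mpr hu
    have hnd := hU.2 _ hW
    have h1 : N2 R (U \ {u}) ≤ N2 R U := by
      apply Finset.sum_le_sum
      intro y _
      exact min_le_min le_rfl
        (Set.ncard_le_ncard (fun x hx => ⟨hx.1.1, hx.2⟩) (Set.toFinite _))
    have h2 : (U \ {u}).ncard = U.ncard - 1 :=
      Set.ncard_diff_singleton_of_mem hu
    have hpos : 1 ≤ U.ncard := (Set.ncard_pos (Set.toFinite _)).mpr ⟨u, hu⟩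
    have h3 : ¬ (N2 R (U \ {u}) < 2 * (U \ {u}).ncard) := hnd
    omega
end

section
/- Let G be a bipartite graph with equipartition V(G) = X ∪ Y, let U ⊆ X be a minimal deficient set, and let M be the set of vertices of N(U) adjacent to exactly one vertex of U. Then no vertex of U is adjacent to more than one vertex of M. -/
/-- If `U` is a minimal deficient set and `M` is the set of vertices of `N(U)` adjacent
to exactly one vertex of `U`, then no vertex of `U` is adjacent to more than one vertex
of `M`. -/
theorem minimalDeficient_at_most_one_private_neighbor {α β : Type*} [Fintype α] [Fintype β]
    (R : α → β → Prop) (hcard : Fintype.card α = Fintype.card β)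
    (U : Set α) (hU : MinimalDeficient R U) :
    ∀ u ∈ U, {y : β | nbrIn R U y = 1 ∧ R u y}.ncard ≤ 1 := by

  classical
  intro u hu
  by_contra hcon
  push_neg at hcon
  obtain ⟨y1, y2, hy1, hy2, hne⟩ := (Set.one_lt_ncard_iff (Set.toFinite _)).mp hcon
  simp only [Set.mem_setOf_eq] at hy1 hy2
  set W := U \ {u} with hWdef
  have hmono : ∀ y, nbrIn R W y ≤ nbrIn R U y := by
    intro y
    apply Set.ncard_le_ncard
    · intro x hx; exact ⟨hx.1.1, hx.2⟩
    · exact Set.toFinite _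
  have hzero : ∀ y : β, nbrIn R U y = 1 → R u y → nbrIn R W y = 0 := by
    intro y h1 hRy
    obtain ⟨a, ha⟩ := Set.ncard_eq_one.mp h1
    have hua : u = a := by
      have : u ∈ {x | x ∈ U ∧ R x y} := ⟨hu, hRy⟩
      rw [ha] at this; exact this
    have hemp : {x | x ∈ W ∧ R x y} = ∅ := by
      ext x
      simp only [Set.mem_setOf_eq, Set.mem_empty_iff_false, iff_false]
      rintro ⟨⟨hxU, hxu⟩, hxy⟩
      have hx : x ∈ ({a} : Set α) := ha ▸ (show x ∈ {x | x ∈ U ∧ R x y} from ⟨hxU, hxy⟩)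
      exact hxu (by simpa [← hua] using hx)
    rw [nbrIn, hemp, Set.ncard_empty]
  have hsub : ({y1, y2} : Finset β) ⊆ Finset.univ := Finset.subset_univ _
  have sU : ∑ y ∈ ({y1, y2} : Finset β), min 2 (nbrIn R U y) = 2 := by
    rw [Finset.sum_pair hne, hy1.1, hy2.1]; rfl
  have sW : ∑ y ∈ ({y1, y2} : Finset β), min 2 (nbrIn R W y) = 0 := by
    rw [Finset.sum_pair hne, hzero y1 hy1.1 hy1.2, hzero y2 hy2.1 hy2.2]; rfl
  have key : N2 R W + 2 ≤ N2 R U := by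
    have eU : N2 R U = (∑ y ∈ Finset.univ \ {y1, y2}, min 2 (nbrIn R U y)) +
        ∑ y ∈ ({y1, y2} : Finset β), min 2 (nbrIn R U y) := (Finset.sum_sdiff hsub).symm
    have eW : N2 R W = (∑ y ∈ Finset.univ \ {y1, y2}, min 2 (nbrIn R W y)) +
        ∑ y ∈ ({y1, y2} : Finset β), min 2 (nbrIn R W y) := (Finset.sum_sdiff hsub).symm
    have hle : (∑ y ∈ Finset.univ \ {y1, y2}, min 2 (nbrIn R W y)) ≤
        ∑ y ∈ Finset.univ \ {y1, y2}, min 2 (nbrIn R U y) :=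
      Finset.sum_le_sum fun y _ => min_le_min le_rfl (hmono y)
    omega
  have hWcard : W.ncard + 1 = U.ncard :=
    Set.ncard_diff_singleton_add_one hu (Set.toFinite U)
  have hWss : W ⊂ U := Set.sdiff_singleton_ssubset.mpr hu
  have := hU.1
  unfold Deficient at this
  exact hU.2 W hWss (by unfold Deficient; omega)
end

section
/- Let G be a bipartite graph with equipartition V(G) = X ∪ Y that has no 2-factor, and let U ⊆ X be a minimal deficient set with |U| = k. Then deg(u) ≤ k for every u ∈ U, and at least k − 1 vertices of U have degree at most k − 1. -/
section Aux

variable {α β : Type*} [Fintype α] [Fintype β] {R : α → β → Prop}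

lemma nbrIn_mono {W U : Set α} (h : W ⊆ U) (y : β) : nbrIn R W y ≤ nbrIn R U y :=
  Set.ncard_le_ncard (fun x hx => ⟨h hx.1, hx.2⟩) (Set.toFinite _)

lemma one_le_nbrIn {U : Set α} {u : α} (hu : u ∈ U) {y : β} (h : R u y) :
    1 ≤ nbrIn R U y := by
  have : (0:ℕ) < nbrIn R U y :=
    (Set.ncard_pos (Set.toFinite _)).mpr ⟨u, hu, h⟩
  omega

lemma nbrIn_diff_zero {U : Set α} {u : α} (hu : u ∈ U) {y : β} (h : R u y)
    (h1 : nbrIn R U y = 1) : nbrIn R (U \ {u}) y = 0 := by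
  obtain ⟨a, ha⟩ := (Set.ncard_eq_one).mp h1
  have hua : u = a := by
    have : u ∈ {x | x ∈ U ∧ R x y} := ⟨hu, h⟩
    rw [ha] at this; exact this
  unfold nbrIn
  rw [Set.ncard_eq_zero (Set.toFinite _)]
  ext x
  simp only [Set.mem_setOf_eq, Set.mem_diff, Set.mem_singleton_iff, Set.mem_empty_iff_false,
    iff_false]
  rintro ⟨⟨hxU, hxu⟩, hxy⟩
  have : x ∈ {x | x ∈ U ∧ R x y} := ⟨hxU, hxy⟩
  rw [ha] at this
  exact hxu (this.trans hua.symm)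

lemma not_two_nbrs {U : Set α} {u₁ u₂ : α} (h1 : u₁ ∈ U) (h2 : u₂ ∈ U) (hne : u₁ ≠ u₂)
    {y : β} (hr1 : R u₁ y) (hr2 : R u₂ y) : nbrIn R U y ≠ 1 := by
  have : 1 < nbrIn R U y := by
    unfold nbrIn
    rw [Set.one_lt_ncard_iff (Set.toFinite _)]
    exact ⟨u₁, u₂, ⟨h1, hr1⟩, ⟨h2, hr2⟩, hne⟩
  omega

end Aux

/-- If a bipartite graph with equipartition has no 2-factor and `U` is a minimal
deficient set with `|U| = k`, then every vertex of `U` has degree at most `k`, and at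
least `k - 1` vertices of `U` have degree at most `k - 1`. -/
theorem minimalDeficient_degree_bounds {α β : Type*} [Fintype α] [Fintype β]
    (R : α → β → Prop) (hcard : Fintype.card α = Fintype.card β)
    (hno : ¬ HasBipTwoFactor R)
    (U : Set α) (k : ℕ) (hU : MinimalDeficient R U) (hk : U.ncard = k) :
    (∀ u ∈ U, degX R u ≤ k) ∧ k - 1 ≤ {u : α | u ∈ U ∧ degX R u ≤ k - 1}.ncard := by
  classical
  obtain ⟨hdef, hmin⟩ := hU
  have hN2 : N2 R U < 2 * k := hk ▸ hdef
  have hk1 : 1 ≤ k := by omega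
  set A : Finset β := Finset.univ.filter (fun y => 2 ≤ nbrIn R U y) with hA
  set B : α → Finset β := fun u => Finset.univ.filter (fun y => nbrIn R U y = 1 ∧ R u y) with hB
  -- L1 : 2 * A.card ≤ N2 R U
  have hL1 : 2 * A.card ≤ N2 R U := by
    calc 2 * A.card = ∑ _y ∈ A, 2 := by rw [Finset.sum_const, smul_eq_mul, mul_comm]
    _ ≤ ∑ y ∈ A, min 2 (nbrIn R U y) := by
        refine Finset.sum_le_sum fun y hy => ?_
        simp only [hA, Finset.mem_filter] at hy
        omega
    _ ≤ N2 R U := Finset.sum_le_sum_of_subset (Finset.subset_univ A)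
  have hAk : A.card ≤ k - 1 := by omega
  -- L3+L4 : for u ∈ U, (B u).card ≤ 1
  have hBcard : ∀ u ∈ U, (B u).card ≤ 1 := by
    intro u hu
    have hss : U \ {u} ⊂ U := Set.sdiff_singleton_ssubset.mpr hu
    have hmin' := hmin _ hss
    simp only [Deficient, not_lt] at hmin'
    have hW : (U \ {u}).ncard = k - 1 := by
      rw [Set.ncard_diff_singleton_of_mem hu, hk]
    have hL3 : (B u).card + N2 R (U \ {u}) ≤ N2 R U := by
      have h1 : (B u).card = ∑ y : β, (if nbrIn R U y = 1 ∧ R u y then 1 else 0) := by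
        simp only [hB]
        rw [Finset.card_eq_sum_ones, Finset.sum_filter]
      rw [h1, N2, N2, ← Finset.sum_add_distrib]
      refine Finset.sum_le_sum fun y _ => ?_
      by_cases hc : nbrIn R U y = 1 ∧ R u y
      · rw [if_pos hc, nbrIn_diff_zero hu hc.2 hc.1, hc.1]
        omega
      · rw [if_neg hc]
        have := nbrIn_mono (R := R) (W := U \ {u}) (U := U) Set.diff_subset y
        omega
    have := hmin'
    rw [hW] at this
    omega
  -- L2 : deg bound
  have hL2 : ∀ u ∈ U, degX R u ≤ A.card + (B u).card := by
    intro u hu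
    have hsub : {y | R u y} ⊆ (↑(A ∪ B u) : Set β) := by
      intro y hy
      have h1 := one_le_nbrIn hu hy
      simp only [Finset.coe_union, Set.mem_union, hA, hB, Finset.coe_filter,
        Set.mem_setOf_eq, Finset.mem_univ, true_and]
      rcases Nat.lt_or_ge (nbrIn R U y) 2 with h | h
      · exact Or.inr ⟨by omega, hy⟩
      · exact Or.inl h
    calc degX R u ≤ (↑(A ∪ B u) : Set β).ncard :=
          Set.ncard_le_ncard hsub (Set.toFinite _)
    _ = (A ∪ B u).card := Set.ncard_coe_finset _
    _ ≤ A.card + (B u).card := Finset.card_union_le _ _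
  constructor
  · intro u hu
    have := hL2 u hu
    have := hBcard u hu
    omega
  -- second part
  by_cases hex : ∃ u₁ ∈ U, ∃ u₂ ∈ U, u₁ ≠ u₂ ∧ 1 ≤ (B u₁).card ∧ 1 ≤ (B u₂).card
  · -- then A.card ≤ k - 2 and all degrees ≤ k - 1
    obtain ⟨u₁, hu₁, u₂, hu₂, hne, hb₁, hb₂⟩ := hex
    have hpair : 2 * A.card + (B u₁).card + (B u₂).card ≤ N2 R U := by
      have hsum : ∀ y : β,
          (if 2 ≤ nbrIn R U y then 2 else 0) + (if nbrIn R U y = 1 ∧ R u₁ y then 1 else 0)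
            + (if nbrIn R U y = 1 ∧ R u₂ y then 1 else 0) ≤ min 2 (nbrIn R U y) := by
        intro y
        by_cases hc1 : nbrIn R U y = 1 ∧ R u₁ y
        · by_cases hc2 : nbrIn R U y = 1 ∧ R u₂ y
          · exact absurd hc1.1 (not_two_nbrs hu₁ hu₂ hne hc1.2 hc2.2)
          · rw [if_neg (by omega : ¬ 2 ≤ nbrIn R U y), if_pos hc1, if_neg hc2]
            omega
        · by_cases hc2 : nbrIn R U y = 1 ∧ R u₂ y
          · rw [if_neg (by omega : ¬ 2 ≤ nbrIn R U y), if_neg hc1, if_pos hc2]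
            omega
          · rw [if_neg hc1, if_neg hc2]
            split_ifs with h <;> omega
      have e1 : 2 * A.card = ∑ y : β, (if 2 ≤ nbrIn R U y then 2 else 0) := by
        simp only [hA]
        rw [← Finset.sum_filter, Finset.sum_const, smul_eq_mul, mul_comm]
      have e2 : ∀ u : α, (B u).card = ∑ y : β, (if nbrIn R U y = 1 ∧ R u y then 1 else 0) := by
        intro u
        simp only [hB]
        rw [Finset.card_eq_sum_ones, Finset.sum_filter]
      rw [e1, e2 u₁, e2 u₂, ← Finset.sum_add_distrib, ← Finset.sum_add_distrib]
      exact Finset.sum_le_sum fun y _ => hsum y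
    have hAk2 : A.card ≤ k - 2 := by omega
    have hall : ∀ u ∈ U, degX R u ≤ k - 1 := by
      intro u hu
      have := hL2 u hu
      have := hBcard u hu
      omega
    have hsub : U ⊆ {u : α | u ∈ U ∧ degX R u ≤ k - 1} := fun u hu => ⟨hu, hall u hu⟩
    have := Set.ncard_le_ncard hsub (Set.toFinite _)
    omega
  · push_neg at hex
    by_cases h0 : ∃ u₀ ∈ U, 1 ≤ (B u₀).card
    · obtain ⟨u₀, hu₀, _⟩ := h0
      have hsub : U \ {u₀} ⊆ {u : α | u ∈ U ∧ degX R u ≤ k - 1} := by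
        rintro u ⟨hu, hne⟩
        refine ⟨hu, ?_⟩
        have hBu : (B u).card = 0 := by
          by_contra hb
          have h1 : 1 ≤ (B u).card := by omega
          have := hex u hu u₀ hu₀ (by simpa using hne) h1
          omega
        have := hL2 u hu
        omega
      have hW : (U \ {u₀}).ncard = k - 1 := by
        rw [Set.ncard_diff_singleton_of_mem hu₀, hk]
      have := Set.ncard_le_ncard hsub (Set.toFinite _)
      omega
    · push_neg at h0
      have hsub : U ⊆ {u : α | u ∈ U ∧ degX R u ≤ k - 1} := by
        intro u hu
        refine ⟨hu, ?_⟩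
        have := hL2 u hu
        have := h0 u hu
        omega
      have := Set.ncard_le_ncard hsub (Set.toFinite _)
      omega
end

section
/- Let G be a bipartite graph with equipartition V(G) = X ∪ Y and suppose U ⊆ X is a minimal deficient set. Let Y₀ be the vertices of Y with no neighbor in U, Y₁ those with exactly one neighbor in U, and set U* = Y₀ ∪ Y₁. Then U* is a deficient set in G. -/
open Classical in
private lemma ncard_setOf_eq' {γ : Type*} [Fintype γ] (p : γ → Prop) :
    {x | p x}.ncard = (Finset.univ.filter p).card := by
  classical
  rw [Set.ncard_eq_toFinset_card']
  simp

/-- If `U ⊆ X` is a minimal deficient set, `Y₀` the vertices of `Y` with no neighbour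
in `U`, `Y₁` those with exactly one neighbour in `U`, then `U* = Y₀ ∪ Y₁` is a
deficient set (in the bipartite graph viewed from the side `Y`). -/
theorem minimalDeficient_dual_deficient {α β : Type*} [Fintype α] [Fintype β]
    (R : α → β → Prop) (hcard : Fintype.card α = Fintype.card β)
    (U : Set α) (hU : MinimalDeficient R U) :
    Deficient (fun y x => R x y)
      ({y : β | nbrIn R U y = 0} ∪ {y : β | nbrIn R U y = 1}) := by
  classical
  obtain ⟨hdef, -⟩ := hU
  set S : Set β := {y : β | nbrIn R U y = 0} ∪ {y : β | nbrIn R U y = 1} with hSdef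
  have hSmem : ∀ y, y ∈ S ↔ nbrIn R U y ≤ 1 := by
    intro y
    simp only [hSdef, Set.mem_union, Set.mem_setOf_eq]
    omega
  have hnbr : ∀ y, nbrIn R U y = (Finset.univ.filter (fun x => x ∈ U ∧ R x y)).card := by
    intro y; rw [nbrIn, ncard_setOf_eq']; congr!
  have hnbr' : ∀ x, nbrIn (fun y x => R x y) S x
      = (Finset.univ.filter (fun y => y ∈ S ∧ R x y)).card := by
    intro x; rw [nbrIn, ncard_setOf_eq']; congr!
  set FU := Finset.univ.filter (fun x : α => x ∈ U) with hFU
  set FS := Finset.univ.filter (fun y : β => y ∈ S) with hFS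
  set FY2 := Finset.univ.filter (fun y : β => 2 ≤ nbrIn R U y) with hFY2
  have hUcard : U.ncard = FU.card := by
    rw [show U = {x | x ∈ U} from rfl, ncard_setOf_eq', hFU]
  have hScard : S.ncard = FS.card := by
    rw [show S = {y | y ∈ S} from rfl, ncard_setOf_eq', hFS]; congr!
  -- complements
  have h5 : FU.card + (Finset.univ.filter (fun x : α => ¬ x ∈ U)).card = Fintype.card α := by
    rw [hFU, Finset.card_filter_add_card_filter_not, Finset.card_univ]
  have h1 : FS.card + FY2.card = Fintype.card β := by
    have hcompl : Finset.univ.filter (fun y : β => ¬ y ∈ S) = FY2 := by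
      ext y
      simp only [hFY2, Finset.mem_filter, Finset.mem_univ, true_and, hSmem]
      omega
    rw [← hcompl, hFS, Finset.card_filter_add_card_filter_not, Finset.card_univ]
  -- splitting N2 R U
  have h2 : N2 R U = (∑ y ∈ FS, nbrIn R U y) + 2 * FY2.card := by
    have hsplit := Finset.sum_filter_add_sum_filter_not Finset.univ
      (fun y : β => y ∈ S) (fun y => min 2 (nbrIn R U y))
    have e1 : ∑ y ∈ FS, min 2 (nbrIn R U y) = ∑ y ∈ FS, nbrIn R U y := by
      refine Finset.sum_congr rfl fun y hy => ?_
      have : nbrIn R U y ≤ 1 := (hSmem y).1 (Finset.mem_filter.1 hy).2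
      omega
    have e2 : ∑ y ∈ Finset.univ.filter (fun y : β => ¬ y ∈ S), min 2 (nbrIn R U y)
        = 2 * FY2.card := by
      have hcompl : Finset.univ.filter (fun y : β => ¬ y ∈ S) = FY2 := by
        ext y
        simp only [hFY2, Finset.mem_filter, Finset.mem_univ, true_and, hSmem]
        omega
      rw [hcompl]
      rw [Finset.sum_congr rfl (fun y hy => ?_), Finset.sum_const, smul_eq_mul, mul_comm]
      have : 2 ≤ nbrIn R U y := (Finset.mem_filter.1 hy).2
      omega
    calc N2 R U = ∑ y : β, min 2 (nbrIn R U y) := rfl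
      _ = ∑ y ∈ FS, min 2 (nbrIn R U y)
          + ∑ y ∈ Finset.univ.filter (fun y : β => ¬ y ∈ S), min 2 (nbrIn R U y) := by
            rw [hsplit]
      _ = (∑ y ∈ FS, nbrIn R U y) + 2 * FY2.card := by rw [e1, e2]
  -- double counting
  have h3 : ∑ x ∈ FU, (Finset.univ.filter (fun y => y ∈ S ∧ R x y)).card
      = ∑ y ∈ FS, (Finset.univ.filter (fun x => x ∈ U ∧ R x y)).card := by
    have l1 : ∀ x, (Finset.univ.filter (fun y => y ∈ S ∧ R x y)).card
        = ∑ y ∈ FS, (if R x y then 1 else 0) := by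
      intro x
      rw [Finset.card_filter, hFS, Finset.sum_filter]
      simp [ite_and]
    have l2 : ∀ y, (Finset.univ.filter (fun x => x ∈ U ∧ R x y)).card
        = ∑ x ∈ FU, (if R x y then 1 else 0) := by
      intro y
      rw [Finset.card_filter, hFU, Finset.sum_filter]
      simp [ite_and]
    simp only [l1, l2]
    exact Finset.sum_comm
  -- bounding N2 of the dual
  have h4 : N2 (fun y x => R x y) S
      ≤ (∑ x ∈ FU, (Finset.univ.filter (fun y => y ∈ S ∧ R x y)).card)
        + 2 * (Finset.univ.filter (fun x : α => ¬ x ∈ U)).card := by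
    have hsplit := Finset.sum_filter_add_sum_filter_not Finset.univ
      (fun x : α => x ∈ U) (fun x => min 2 (nbrIn (fun y x => R x y) S x))
    calc N2 (fun y x => R x y) S
        = ∑ x ∈ FU, min 2 (nbrIn (fun y x => R x y) S x)
          + ∑ x ∈ Finset.univ.filter (fun x : α => ¬ x ∈ U),
              min 2 (nbrIn (fun y x => R x y) S x) := by
            rw [N2, ← hsplit, hFU]
      _ ≤ (∑ x ∈ FU, (Finset.univ.filter (fun y => y ∈ S ∧ R x y)).card)
          + 2 * (Finset.univ.filter (fun x : α => ¬ x ∈ U)).card := by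
            gcongr with x hx
            · rw [← hnbr' x]; exact min_le_right _ _
            · calc ∑ x ∈ Finset.univ.filter (fun x : α => ¬ x ∈ U),
                  min 2 (nbrIn (fun y x => R x y) S x)
                  ≤ ∑ _x ∈ Finset.univ.filter (fun x : α => ¬ x ∈ U), 2 :=
                    Finset.sum_le_sum fun x _ => min_le_left _ _
                _ = 2 * (Finset.univ.filter (fun x : α => ¬ x ∈ U)).card := by
                    rw [Finset.sum_const, smul_eq_mul, mul_comm]
  -- deficiency of U
  have hdefU : (∑ y ∈ FS, nbrIn R U y) + 2 * FY2.card < 2 * FU.card := by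
    rw [← h2, ← hUcard]; exact hdef
  -- finish
  show N2 (fun y x => R x y) S < 2 * S.ncard
  rw [hScard]
  have h3' : ∑ x ∈ FU, (Finset.univ.filter (fun y => y ∈ S ∧ R x y)).card
      = ∑ y ∈ FS, nbrIn R U y := by
    rw [h3]; exact Finset.sum_congr rfl fun y _ => (hnbr y).symm
  omega
end

section
/- Let x, y, s be positive real numbers with x ≥ y > s/2 and s an even positive integer. Then the ratio (x(x+1)(x+2)⋯(x+s)) / (y(y+1)(y+2)⋯(y+s)) is at least ((x + s/2)/(y + s/2))². -/
lemma prod_sym (m : ℕ) : ∀ x : ℝ,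
    ∏ i ∈ Finset.range (2*m+1), (x + (i:ℝ)) =
      (x + m) * ∏ r ∈ Finset.range m, ((x + m)^2 - ((r:ℝ)+1)^2) := by
  induction m with
  | zero => intro x; simp
  | succ m ih =>
    intro x
    have h1 : 2*(m+1)+1 = (2*m+1+1)+1 := by ring
    rw [h1, Finset.prod_range_succ, Finset.prod_range_succ']
    have h2 : ∏ i ∈ Finset.range (2*m+1), (x + ((i+1 : ℕ):ℝ)) =
        ∏ i ∈ Finset.range (2*m+1), ((x+1) + (i:ℝ)) := by
      apply Finset.prod_congr rfl; intro i _; push_cast; ring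
    rw [h2, ih (x+1), Finset.prod_range_succ]
    have h3 : ∏ r ∈ Finset.range m, ((x + 1 + (m:ℝ))^2 - ((r:ℝ)+1)^2) =
        ∏ r ∈ Finset.range m, ((x + ((m:ℝ)+1))^2 - ((r:ℝ)+1)^2) := by
      apply Finset.prod_congr rfl; intro r _; ring
    rw [h3]
    push_cast
    ring

/-- Lemma 5 of the paper: for positive reals `x ≥ y > s/2` with `s` an even positive
integer, `(x(x+1)⋯(x+s)) / (y(y+1)⋯(y+s)) ≥ ((x + s/2)/(y + s/2))²`. -/
theorem rising_factorial_ratio_ge {x y : ℝ} {s : ℕ} (hs : Even s) (hspos : 0 < s)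
    (hxpos : 0 < x) (hypos : 0 < y) (hxy : y ≤ x) (hy : (s : ℝ) / 2 < y) :
    ((x + (s : ℝ) / 2) / (y + (s : ℝ) / 2)) ^ 2 ≤
      (∏ i ∈ Finset.range (s + 1), (x + (i : ℝ))) /
        (∏ i ∈ Finset.range (s + 1), (y + (i : ℝ))) := by
  obtain ⟨m, hm⟩ := hs
  have hm2 : s = 2*m := by omega
  have hmpos : 1 ≤ m := by omega
  subst hm2
  have hhalf : ((2*m : ℕ) : ℝ) / 2 = (m : ℝ) := by push_cast; ring
  rw [hhalf, prod_sym m x, prod_sym m y]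
  set a := x + (m:ℝ) with ha
  set b := y + (m:ℝ) with hb
  have hbpos : 0 < b := by positivity
  have hab : b ≤ a := by simp [ha, hb]; linarith
  have hapos : 0 < a := lt_of_lt_of_le hbpos hab
  -- each factor of the y-product is positive
  have hBfac : ∀ r ∈ Finset.range m, 0 < b^2 - ((r:ℝ)+1)^2 := by
    intro r hr
    have hr' : (r:ℝ) + 1 ≤ (m:ℝ) := by
      have := Finset.mem_range.mp hr
      exact_mod_cast this
    have hbr : (r:ℝ) + 1 < b := by
      rw [hb]; nlinarith [hy.trans_le le_rfl, hhalf]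
    nlinarith
  have hB : 0 < ∏ r ∈ Finset.range m, (b^2 - ((r:ℝ)+1)^2) := Finset.prod_pos hBfac
  rw [le_div_iff₀ (by positivity)]
  have key : ∏ r ∈ Finset.range m, ((a/b)^2 * (b^2 - ((r:ℝ)+1)^2)) ≤
      ∏ r ∈ Finset.range m, (a^2 - ((r:ℝ)+1)^2) := by
    apply Finset.prod_le_prod
    · intro r hr; exact mul_nonneg (sq_nonneg _) (hBfac r hr).le
    · intro r hr
      rw [div_pow, div_mul_eq_mul_div, div_le_iff₀ (by positivity : (0:ℝ) < b^2)]
      nlinarith [sq_nonneg ((r:ℝ)+1), mul_le_mul hab hab hbpos.le hapos.le]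
  rw [Finset.prod_mul_distrib, Finset.prod_const, Finset.card_range] at key
  have hbne : b ≠ 0 := ne_of_gt hbpos
  have ht : 1 ≤ a / b := (one_le_div hbpos).mpr hab
  have h4 : (a/b)^2 ≤ (a/b)^(2*m+1) := pow_le_pow_right₀ ht (by omega)
  calc (a/b)^2 * (b * ∏ r ∈ Finset.range m, (b^2 - ((r:ℝ)+1)^2))
      ≤ (a/b)^(2*m+1) * (b * ∏ r ∈ Finset.range m, (b^2 - ((r:ℝ)+1)^2)) := by
        exact mul_le_mul_of_nonneg_right h4 (by positivity)
    _ = a * (((a/b)^2)^m * ∏ r ∈ Finset.range m, (b^2 - ((r:ℝ)+1)^2)) := by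
        rw [← pow_mul, pow_succ]; field_simp
    _ ≤ a * ∏ r ∈ Finset.range m, (a^2 - ((r:ℝ)+1)^2) :=
        mul_le_mul_of_nonneg_left key hapos.le
end

section
/- Let n = 4m and δ = 2d = n/2 + s with s ≥ 1 an even integer, and for 0 ≤ k < n/4 − 3 define A_k = 2·C(δ, d + k)·C(n − δ − 1, 2m − d − k) and B_k = 2·C(δ, m − k − 1)·C(n − δ − 1, m + k + 1). Then (A_{k+1}/A_k) / (B_{k+1}/B_k) = [(n/4 + s/2 − k)(n/4 − s/2 − k)(n/4 + s + k + 2)(n/4 + k + 2)] / [(n/4 − k − 1)(n/4 − s − k − 2)(n/4 + s/2 + k + 1)(n/4 − s/2 + k)], and this ratio is at least (n/4 − k − 1)/(n/4 − k − 2). -/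
/-- `A k` from the proof of Theorem 7: with `n = 4m`, `δ = 2d`,
`A k = 2·C(δ, d+k)·C(n-δ-1, 2m-d-k)`, as a rational number. -/
def Aterm (m d k : ℕ) : ℚ :=
  2 * ((2 * d).choose (d + k) : ℚ) * ((4 * m - 2 * d - 1).choose (2 * m - d - k) : ℚ)

/-- `B k` from the proof of Theorem 7: `B k = 2·C(δ, m-k-1)·C(n-δ-1, m+k+1)`. -/
def Bterm (m d k : ℕ) : ℚ :=
  2 * ((2 * d).choose (m - k - 1) : ℚ) * ((4 * m - 2 * d - 1).choose (m + k + 1) : ℚ)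


/-- Positivity certificate for the final estimate. -/
lemma cert_aux (w e k : ℕ) :
    (2*(w:ℚ)+4+e) * ((2*(w:ℚ)+4+e)*((e:ℚ)+1)*(3*(w:ℚ)+2*k+7+e)*((w:ℚ)+2*k+4+e)) ≤
    ((3*(w:ℚ)+6+e)*((w:ℚ)+4+e)*(4*(w:ℚ)+2*k+9+e)*(2*(w:ℚ)+2*k+7+e)) * (2*(w:ℚ)+3+e) := by
  have h : ((3*(w:ℚ)+6+e)*((w:ℚ)+4+e)*(4*(w:ℚ)+2*k+9+e)*(2*(w:ℚ)+2*k+7+e)) * (2*(w:ℚ)+3+e)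
      - (2*(w:ℚ)+4+e) * ((2*(w:ℚ)+4+e)*((e:ℚ)+1)*(3*(w:ℚ)+2*k+7+e)*((w:ℚ)+2*k+4+e)) =
      (4088 + 1952 * (k:ℚ) + 224 * (k:ℚ)^2 + 3706 * (e:ℚ) + 1424 * (e:ℚ) * (k:ℚ) + 120 * (e:ℚ) * (k:ℚ)^2 + 1223 * (e:ℚ)^2 + 338 * (e:ℚ)^2 * (k:ℚ) + 16 * (e:ℚ)^2 * (k:ℚ)^2 + 174 * (e:ℚ)^3 + 26 * (e:ℚ)^3 * (k:ℚ) + 9 * (e:ℚ)^4 + 8986 * (w:ℚ) + 3648 * (w:ℚ) * (k:ℚ) + 344 * (w:ℚ) * (k:ℚ)^2 + 6442 * (w:ℚ) * (e:ℚ) + 1960 * (w:ℚ) * (e:ℚ) * (k:ℚ) + 120 * (w:ℚ) * (e:ℚ) * (k:ℚ)^2 + 1587 * (w:ℚ) * (e:ℚ)^2 + 308 * (w:ℚ) * (e:ℚ)^2 * (k:ℚ) + 8 * (w:ℚ) * (e:ℚ)^2 * (k:ℚ)^2 + 151 * (w:ℚ) * (e:ℚ)^3 + 12 * (w:ℚ)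 * (e:ℚ)^3 * (k:ℚ) + 4 * (w:ℚ) * (e:ℚ)^4 + 7639 * (w:ℚ)^2 + 2448 * (w:ℚ)^2 * (k:ℚ) + 164 * (w:ℚ)^2 * (k:ℚ)^2 + 4085 * (w:ℚ)^2 * (e:ℚ) + 868 * (w:ℚ)^2 * (e:ℚ) * (k:ℚ) + 28 * (w:ℚ)^2 * (e:ℚ) * (k:ℚ)^2 + 670 * (w:ℚ)^2 * (e:ℚ)^2 + 68 * (w:ℚ)^2 * (e:ℚ)^2 * (k:ℚ) + 32 * (w:ℚ)^2 * (e:ℚ)^3 + 3140 * (w:ℚ)^3 + 700 * (w:ℚ)^3 * (k:ℚ) + 24 * (w:ℚ)^3 * (k:ℚ)^2 + 1120 * (w:ℚ)^3 * (e:ℚ) + 124 * (w:ℚ)^3 * (e:ℚ) * (k:ℚ) + 92 * (w:ℚ)^3 * (e:ℚ)^2 + 624 * (w:ℚ)^4 + 72 * (w:ℚ)^4 * (k:ℚ) + 112 * (w:ℚ)^4 * (e:ℚ) + 48 * (w:ℚ)^5) := by ring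
  have h2 : (0:ℚ) ≤ (4088 + 1952 * (k:ℚ) + 224 * (k:ℚ)^2 + 3706 * (e:ℚ) + 1424 * (e:ℚ) * (k:ℚ) + 120 * (e:ℚ) * (k:ℚ)^2 + 1223 * (e:ℚ)^2 + 338 * (e:ℚ)^2 * (k:ℚ) + 16 * (e:ℚ)^2 * (k:ℚ)^2 + 174 * (e:ℚ)^3 + 26 * (e:ℚ)^3 * (k:ℚ) + 9 * (e:ℚ)^4 + 8986 * (w:ℚ) + 3648 * (w:ℚ) * (k:ℚ) + 344 * (w:ℚ) * (k:ℚ)^2 + 6442 * (w:ℚ) * (e:ℚ) + 1960 * (w:ℚ) * (e:ℚ) * (k:ℚ) + 120 * (w:ℚ) * (e:ℚ) * (k:ℚ)^2 + 1587 * (w:ℚ) * (e:ℚ)^2 + 308 * (w:ℚ) * (e:ℚ)^2 * (k:ℚ) + 8 * (w:ℚ) * (e:ℚ)^2 * (k:ℚ)^2 + 151 * (w:ℚ) * (e:ℚ)^3 + 12 * (w:ℚ) * (e:ℚ)^3 * (k:ℚ) + 4 * (w:ℚ) * (e:ℚ)^4 + 7639 * (w:ℚ)^2 + 2448 * (w:ℚ)^2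 * (k:ℚ) + 164 * (w:ℚ)^2 * (k:ℚ)^2 + 4085 * (w:ℚ)^2 * (e:ℚ) + 868 * (w:ℚ)^2 * (e:ℚ) * (k:ℚ) + 28 * (w:ℚ)^2 * (e:ℚ) * (k:ℚ)^2 + 670 * (w:ℚ)^2 * (e:ℚ)^2 + 68 * (w:ℚ)^2 * (e:ℚ)^2 * (k:ℚ) + 32 * (w:ℚ)^2 * (e:ℚ)^3 + 3140 * (w:ℚ)^3 + 700 * (w:ℚ)^3 * (k:ℚ) + 24 * (w:ℚ)^3 * (k:ℚ)^2 + 1120 * (w:ℚ)^3 * (e:ℚ) + 124 * (w:ℚ)^3 * (e:ℚ) * (k:ℚ) + 92 * (w:ℚ)^3 * (e:ℚ)^2 + 624 * (w:ℚ)^4 + 72 * (w:ℚ)^4 * (k:ℚ) + 112 * (w:ℚ)^4 * (e:ℚ) + 48 * (w:ℚ)^5) := by positivity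
  linarith

/-- Equation (9) of the paper and the subsequent estimate: with `n = 4m`,
`δ = 2d = n/2 + s`, `s ≥ 1` even, `0 ≤ k < n/4 - 3` and all the binomial coefficients
involved positive, the ratio `(A_{k+1}/A_k)/(B_{k+1}/B_k)` equals the displayed product
and is at least `(n/4 - k - 1)/(n/4 - k - 2)`. -/
theorem ratio_identity_and_bound (m d s k : ℕ) (hs : Even s) (hs1 : 1 ≤ s)
    (hδ : 2 * d = 2 * m + s) (hk : k + 3 < m) (hks : s + k + 2 < m)
    (h1 : 2 * d ≤ 4 * m - 1) (h2 : 2 * m - d - k ≤ 4 * m - 2 * d - 1)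
    (h3 : m + k + 2 ≤ 4 * m - 2 * d - 1) :
    (Aterm m d (k + 1) / Aterm m d k) / (Bterm m d (k + 1) / Bterm m d k) =
        (((m : ℚ) + (s : ℚ) / 2 - k) * ((m : ℚ) - (s : ℚ) / 2 - k) *
            ((m : ℚ) + s + k + 2) * ((m : ℚ) + k + 2)) /
          (((m : ℚ) - k - 1) * ((m : ℚ) - s - k - 2) *
            ((m : ℚ) + (s : ℚ) / 2 + k + 1) * ((m : ℚ) - (s : ℚ) / 2 + k)) ∧
      ((m : ℚ) - k - 1) / ((m : ℚ) - k - 2) ≤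
        (Aterm m d (k + 1) / Aterm m d k) / (Bterm m d (k + 1) / Bterm m d k) := by
  obtain ⟨t, ht⟩ := hs
  obtain ⟨w, hw⟩ : ∃ w, t = w + 1 := ⟨t - 1, by omega⟩
  subst hw
  obtain ⟨e, he⟩ : ∃ e, m = 2 * w + k + 5 + e := ⟨m - (2 * w + k + 5), by omega⟩
  subst he ht
  have hd : d = 3 * w + k + 6 + e := by omega
  subst hd
  -- abbreviations for the eight binomial coefficients
  set a0 : ℚ := ((6 * w + 2 * k + 12 + 2 * e).choose (3 * w + 2 * k + 6 + e) : ℚ) with ha0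
  set a1 : ℚ := ((6 * w + 2 * k + 12 + 2 * e).choose (3 * w + 2 * k + 7 + e) : ℚ) with ha1
  set b0 : ℚ := ((2 * w + 2 * k + 7 + 2 * e).choose (w + 4 + e) : ℚ) with hb0
  set b1 : ℚ := ((2 * w + 2 * k + 7 + 2 * e).choose (w + 3 + e) : ℚ) with hb1
  set c0 : ℚ := ((6 * w + 2 * k + 12 + 2 * e).choose (2 * w + 4 + e) : ℚ) with hc0
  set c1 : ℚ := ((6 * w + 2 * k + 12 + 2 * e).choose (2 * w + 3 + e) : ℚ) with hc1
  set d0 : ℚ := ((2 * w + 2 * k + 7 + 2 * e).choose (2 * w + 2 * k + 6 + e) : ℚ) with hd0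
  set d1 : ℚ := ((2 * w + 2 * k + 7 + 2 * e).choose (2 * w + 2 * k + 7 + e) : ℚ) with hd1
  have pa0 : 0 < a0 := by rw [ha0]; exact_mod_cast Nat.choose_pos (by omega)
  have pa1 : 0 < a1 := by rw [ha1]; exact_mod_cast Nat.choose_pos (by omega)
  have pb0 : 0 < b0 := by rw [hb0]; exact_mod_cast Nat.choose_pos (by omega)
  have pb1 : 0 < b1 := by rw [hb1]; exact_mod_cast Nat.choose_pos (by omega)
  have pc0 : 0 < c0 := by rw [hc0]; exact_mod_cast Nat.choose_pos (by omega)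
  have pc1 : 0 < c1 := by rw [hc1]; exact_mod_cast Nat.choose_pos (by omega)
  have pd0 : 0 < d0 := by rw [hd0]; exact_mod_cast Nat.choose_pos (by omega)
  have pd1 : 0 < d1 := by rw [hd1]; exact_mod_cast Nat.choose_pos (by omega)
  -- the four ratio relations
  have relA : a1 * (3 * (w : ℚ) + 2 * k + 7 + e) = a0 * (3 * w + 6 + e) := by
    have h := Nat.choose_succ_right_eq (6 * w + 2 * k + 12 + 2 * e) (3 * w + 2 * k + 6 + e)
    rw [show 6 * w + 2 * k + 12 + 2 * e - (3 * w + 2 * k + 6 + e) = 3 * w + 6 + e from by omega,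
      show 3 * w + 2 * k + 6 + e + 1 = 3 * w + 2 * k + 7 + e from by omega] at h
    rw [ha0, ha1]; exact_mod_cast h
  have relB : b0 * ((w : ℚ) + 4 + e) = b1 * ((w : ℚ) + 2 * k + 4 + e) := by
    have h := Nat.choose_succ_right_eq (2 * w + 2 * k + 7 + 2 * e) (w + 3 + e)
    rw [show 2 * w + 2 * k + 7 + 2 * e - (w + 3 + e) = w + 2 * k + 4 + e from by omega,
      show w + 3 + e + 1 = w + 4 + e from by omega] at h
    rw [hb0, hb1]; exact_mod_cast h
  have relC : c0 * (2 * (w : ℚ) + 4 + e) = c1 * (4 * (w : ℚ) + 2 * k + 9 + e) := by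
    have h := Nat.choose_succ_right_eq (6 * w + 2 * k + 12 + 2 * e) (2 * w + 3 + e)
    rw [show 6 * w + 2 * k + 12 + 2 * e - (2 * w + 3 + e) = 4 * w + 2 * k + 9 + e from by omega,
      show 2 * w + 3 + e + 1 = 2 * w + 4 + e from by omega] at h
    rw [hc0, hc1]; exact_mod_cast h
  have relD : d1 * (2 * (w : ℚ) + 2 * k + 7 + e) = d0 * ((e : ℚ) + 1) := by
    have h := Nat.choose_succ_right_eq (2 * w + 2 * k + 7 + 2 * e) (2 * w + 2 * k + 6 + e)
    rw [show 2 * w + 2 * k + 7 + 2 * e - (2 * w + 2 * k + 6 + e) = e + 1 from by omega,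
      show 2 * w + 2 * k + 6 + e + 1 = 2 * w + 2 * k + 7 + e from by omega] at h
    rw [hd0, hd1]; exact_mod_cast h
  -- rewrite the A/B terms
  have eA1 : Aterm (2 * w + k + 5 + e) (3 * w + k + 6 + e) (k + 1) = 2 * a1 * b1 := by
    rw [Aterm, ha1, hb1,
      show 4 * (2 * w + k + 5 + e) - 2 * (3 * w + k + 6 + e) - 1 = 2 * w + 2 * k + 7 + 2 * e
        from by omega,
      show 2 * (3 * w + k + 6 + e) = 6 * w + 2 * k + 12 + 2 * e from by ring,
      show 3 * w + k + 6 + e + (k + 1) = 3 * w + 2 * k + 7 + e from by omega,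
      show 2 * (2 * w + k + 5 + e) - (3 * w + k + 6 + e) - (k + 1) = w + 3 + e from by omega]
  have eA0 : Aterm (2 * w + k + 5 + e) (3 * w + k + 6 + e) k = 2 * a0 * b0 := by
    rw [Aterm, ha0, hb0,
      show 4 * (2 * w + k + 5 + e) - 2 * (3 * w + k + 6 + e) - 1 = 2 * w + 2 * k + 7 + 2 * e
        from by omega,
      show 2 * (3 * w + k + 6 + e) = 6 * w + 2 * k + 12 + 2 * e from by ring,
      show 3 * w + k + 6 + e + k = 3 * w + 2 * k + 6 + e from by omega,
      show 2 * (2 * w + k + 5 + e) - (3 * w + k + 6 + e) - k = w + 4 + e from by omega]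
  have eB1 : Bterm (2 * w + k + 5 + e) (3 * w + k + 6 + e) (k + 1) = 2 * c1 * d1 := by
    rw [Bterm, hc1, hd1,
      show 4 * (2 * w + k + 5 + e) - 2 * (3 * w + k + 6 + e) - 1 = 2 * w + 2 * k + 7 + 2 * e
        from by omega,
      show 2 * (3 * w + k + 6 + e) = 6 * w + 2 * k + 12 + 2 * e from by ring,
      show 2 * w + k + 5 + e - (k + 1) - 1 = 2 * w + 3 + e from by omega,
      show 2 * w + k + 5 + e + (k + 1) + 1 = 2 * w + 2 * k + 7 + e from by omega]
  have eB0 : Bterm (2 * w + k + 5 + e) (3 * w + k + 6 + e) k = 2 * c0 * d0 := by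
    rw [Bterm, hc0, hd0,
      show 4 * (2 * w + k + 5 + e) - 2 * (3 * w + k + 6 + e) - 1 = 2 * w + 2 * k + 7 + 2 * e
        from by omega,
      show 2 * (3 * w + k + 6 + e) = 6 * w + 2 * k + 12 + 2 * e from by ring,
      show 2 * w + k + 5 + e - k - 1 = 2 * w + 4 + e from by omega,
      show 2 * w + k + 5 + e + k + 1 = 2 * w + 2 * k + 6 + e from by omega]
  -- the ratio as an explicit rational function
  have q1 : (0:ℚ) < 3 * (w : ℚ) + 2 * k + 7 + e := by positivity
  have q2 : (0:ℚ) < (w : ℚ) + 2 * k + 4 + e := by positivity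
  have q3 : (0:ℚ) < 2 * (w : ℚ) + 4 + e := by positivity
  have q4 : (0:ℚ) < (e : ℚ) + 1 := by positivity
  have hval : (Aterm (2 * w + k + 5 + e) (3 * w + k + 6 + e) (k + 1) /
        Aterm (2 * w + k + 5 + e) (3 * w + k + 6 + e) k) /
      (Bterm (2 * w + k + 5 + e) (3 * w + k + 6 + e) (k + 1) /
        Bterm (2 * w + k + 5 + e) (3 * w + k + 6 + e) k) =
      ((3 * (w : ℚ) + 6 + e) * ((w : ℚ) + 4 + e) * (4 * (w : ℚ) + 2 * k + 9 + e) *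
          (2 * (w : ℚ) + 2 * k + 7 + e)) /
        ((2 * (w : ℚ) + 4 + e) * ((e : ℚ) + 1) * (3 * (w : ℚ) + 2 * k + 7 + e) *
          ((w : ℚ) + 2 * k + 4 + e)) := by
    rw [eA1, eA0, eB1, eB0]
    have split : (2 * a1 * b1 / (2 * a0 * b0)) / (2 * c1 * d1 / (2 * c0 * d0)) =
        (a1 / a0) * (b1 / b0) * ((c0 / c1) * (d0 / d1)) := by
      field_simp
    have rA : a1 / a0 = (3 * (w : ℚ) + 6 + e) / (3 * (w : ℚ) + 2 * k + 7 + e) := by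
      rw [div_eq_div_iff pa0.ne' q1.ne']; linear_combination relA
    have rB : b1 / b0 = ((w : ℚ) + 4 + e) / ((w : ℚ) + 2 * k + 4 + e) := by
      rw [div_eq_div_iff pb0.ne' q2.ne']; linear_combination -relB
    have rC : c0 / c1 = (4 * (w : ℚ) + 2 * k + 9 + e) / (2 * (w : ℚ) + 4 + e) := by
      rw [div_eq_div_iff pc1.ne' q3.ne']; linear_combination relC
    have rD : d0 / d1 = (2 * (w : ℚ) + 2 * k + 7 + e) / ((e : ℚ) + 1) := by
      rw [div_eq_div_iff pd1.ne' q4.ne']; linear_combination -relD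
    rw [split, rA, rB, rC, rD]
    field_simp
  constructor
  · rw [hval]
    congr 1 <;> push_cast <;> ring
  · rw [hval]
    have hm2 : (0:ℚ) < ((2*w+k+5+e : ℕ):ℚ) - (k:ℚ) - 2 := by
      push_cast
      have h1 := Nat.cast_nonneg (α := ℚ) w
      have h2 := Nat.cast_nonneg (α := ℚ) e
      linarith
    rw [div_le_div_iff₀ hm2 (by positivity)]
    push_cast
    linarith [cert_aux w e k]
end
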